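/- Let X be a real Banach space and Y ⊆ X a closed subspace. Suppose the identity map from the unit sphere S(X*) with the weak* topology to S(X*) with the weak topology is continuous. Then the identity map from S(Y*) with the weak* topology to S(Y*) with the weak topology is also continuous. -/

import Mathlib

open NormedSpace Filter Topology Metric

set_option maxHeartbeats 1000000 in
/-- If the identity map from the unit sphere of `X*` with the weak* topology to the unit
sphere of `X*` with the weak topology is continuous, then the same holds for a closed
subspace `Y ⊆ X`. -/
theorem stmt_0 (X : Type*) [NormedAddCommGroup X] [NormedSpace ℝ X] [CompleteSpace X]
    (Y : Submodule ℝ X) (hYclosed : IsClosed (Y : Set X))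
    (hX : ContinuousOn
      (fun f : WeakDual ℝ X =>
        toWeakSpace ℝ (StrongDual ℝ X) (StrongDual.toWeakDual.symm f))
      {f : WeakDual ℝ X | ‖StrongDual.toWeakDual.symm f‖ = 1}) :
    ContinuousOn
      (fun f : WeakDual ℝ Y =>
        toWeakSpace ℝ (StrongDual ℝ Y) (StrongDual.toWeakDual.symm f))
      {f : WeakDual ℝ Y | ‖StrongDual.toWeakDual.symm f‖ = 1} := by
  -- abbreviations
  set gY : WeakDual ℝ Y → WeakSpace ℝ (StrongDual ℝ Y) :=
    fun f => toWeakSpace ℝ (StrongDual ℝ Y) (StrongDual.toWeakDual.symm f) with hgY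
  set gX : WeakDual ℝ X → WeakSpace ℝ (StrongDual ℝ X) :=
    fun f => toWeakSpace ℝ (StrongDual ℝ X) (StrongDual.toWeakDual.symm f) with hgX
  set SY : Set (WeakDual ℝ Y) := {f : WeakDual ℝ Y | ‖StrongDual.toWeakDual.symm f‖ = 1} with hSY
  set SX : Set (WeakDual ℝ X) := {f : WeakDual ℝ X | ‖StrongDual.toWeakDual.symm f‖ = 1} with hSX
  -- norm-preserving extension
  choose Eφ hEeq hEnorm using fun φ : StrongDual ℝ Y => exists_extension_norm_eq Y φ
  set E : WeakDual ℝ Y → WeakDual ℝ X :=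
    fun u => StrongDual.toWeakDual (Eφ (StrongDual.toWeakDual.symm u)) with hE
  -- restriction map
  set r : WeakDual ℝ X → WeakDual ℝ Y :=
    fun G => StrongDual.toWeakDual ((StrongDual.toWeakDual.symm G).comp Y.subtypeL) with hr
  have hrcont : Continuous r := by
    apply WeakDual.continuous_of_continuous_eval
    intro y
    exact WeakDual.eval_continuous (Y.subtypeL y)
  have hrE : ∀ u, r (E u) = u := by
    intro u
    apply StrongDual.toWeakDual.symm.injective
    ext y
    exact hEeq (StrongDual.toWeakDual.symm u) y
  -- restriction as a continuous linear map between duals, for the weak topologies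
  set rL : StrongDual ℝ X →L[ℝ] StrongDual ℝ Y :=
    (ContinuousLinearMap.compSL ↥Y X ℝ (RingHom.id ℝ) (RingHom.id ℝ)).flip Y.subtypeL with hrL
  set rW : WeakSpace ℝ (StrongDual ℝ X) →L[ℝ] WeakSpace ℝ (StrongDual ℝ Y) := WeakSpace.map rL with hrW
  have hcomm : ∀ G : WeakDual ℝ X, rW (gX G) = gY (r G) := fun G => rfl
  intro f hf
  simp only [hSY, Set.mem_setOf_eq] at hf
  by_contra hcont
  rw [ContinuousWithinAt] at hcont
  obtain ⟨V, hV, hfreq⟩ := not_tendsto_iff_exists_frequently_notMem.mp hcont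
  have hne : (𝓝[SY] f ⊓ 𝓟 {x | gY x ∉ V}).NeBot := by
    rwa [Filter.frequently_iff_neBot] at hfreq
  set l' : Filter (WeakDual ℝ Y) := 𝓝[SY] f ⊓ 𝓟 {x | gY x ∉ V} with hl'
  have hSYl' : SY ∈ l' := mem_inf_of_left self_mem_nhdsWithin
  set m : Filter (WeakDual ℝ X) := Filter.map E l' with hm
  have hmne : m.NeBot := hne.map E
  -- m is supported on the closed unit ball
  set B : Set (WeakDual ℝ X) := WeakDual.toStrongDual ⁻¹' closedBall 0 1 with hB
  have hESY : ∀ u ∈ SY, E u ∈ SX := by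
    intro u hu
    simp only [hSX, Set.mem_setOf_eq]
    rw [hE]
    simp only [LinearEquiv.symm_apply_apply]
    rw [hEnorm]
    exact hu
  have hSXm : SX ∈ m := Filter.mem_map.mpr (Filter.mem_of_superset hSYl' hESY)
  have hmB : m ≤ 𝓟 B := by
    rw [Filter.le_principal_iff]
    refine Filter.mem_of_superset hSXm ?_
    intro G hG
    simp only [hSX, Set.mem_setOf_eq] at hG
    simp only [hB, Set.mem_preimage, mem_closedBall_zero_iff]
    exact le_of_eq hG
  obtain ⟨G₀, hG₀B, hclus⟩ := (WeakDual.isCompact_closedBall (0 : StrongDual ℝ X) 1).exists_clusterPt hmB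
  set n : Filter (WeakDual ℝ X) := 𝓝 G₀ ⊓ m with hn
  have hnne : n.NeBot := hclus
  -- r G₀ = f
  have hrm : Filter.map r m = l' := by
    rw [hm, Filter.map_map]
    have : r ∘ E = id := funext hrE
    rw [this, Filter.map_id]
  have hl'f : l' ≤ 𝓝 f := le_trans inf_le_left nhdsWithin_le_nhds
  have hrn₁ : Filter.map r n ≤ 𝓝 (r G₀) :=
    le_trans (Filter.map_mono inf_le_left) (hrcont.tendsto G₀)
  have hrn₂ : Filter.map r n ≤ 𝓝 f := by
    calc Filter.map r n ≤ Filter.map r m := Filter.map_mono inf_le_right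
    _ = l' := hrm
    _ ≤ 𝓝 f := hl'f
  have hrnne : (Filter.map r n).NeBot := hnne.map r
  have hrG₀ : r G₀ = f :=
    tendsto_nhds_unique (Filter.tendsto_id'.mpr hrn₁) (Filter.tendsto_id'.mpr hrn₂)
  -- G₀ lies on the unit sphere
  have hG₀le : ‖StrongDual.toWeakDual.symm G₀‖ ≤ 1 := by
    simpa [hB, mem_closedBall_zero_iff] using hG₀B
  have hG₀ge : (1 : ℝ) ≤ ‖StrongDual.toWeakDual.symm G₀‖ := by
    have h1 : ‖StrongDual.toWeakDual.symm (r G₀)‖ = 1 := by rw [hrG₀]; exact hf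
    rw [hr] at h1
    simp only [LinearEquiv.symm_apply_apply] at h1
    calc (1 : ℝ) = ‖(StrongDual.toWeakDual.symm G₀).comp Y.subtypeL‖ := h1.symm
    _ ≤ ‖StrongDual.toWeakDual.symm G₀‖ * ‖Y.subtypeL‖ := ContinuousLinearMap.opNorm_comp_le _ _
    _ ≤ ‖StrongDual.toWeakDual.symm G₀‖ * 1 :=
        mul_le_mul_of_nonneg_left (Submodule.norm_subtypeL_le Y) (norm_nonneg _)
    _ = ‖StrongDual.toWeakDual.symm G₀‖ := mul_one _
  have hG₀S : G₀ ∈ SX := le_antisymm hG₀le hG₀ge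
  -- apply the hypothesis at G₀
  have hXG₀ : Filter.Tendsto gX (𝓝[SX] G₀) (𝓝 (gX G₀)) := hX G₀ hG₀S
  have hnSX : n ≤ 𝓝[SX] G₀ := by
    rw [nhdsWithin, le_inf_iff]
    exact ⟨inf_le_left, Filter.le_principal_iff.mpr (Filter.mem_inf_of_right hSXm)⟩
  have hgXn : Filter.map gX n ≤ 𝓝 (gX G₀) := le_trans (Filter.map_mono hnSX) hXG₀
  -- push forward along the (weakly continuous) restriction map
  have hfinal₁ : Filter.map (gY ∘ r) n ≤ 𝓝 (gY f) := by
    have h1 : Filter.map rW (Filter.map gX n) ≤ 𝓝 (rW (gX G₀)) :=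
      le_trans (Filter.map_mono hgXn) (rW.continuous.tendsto (gX G₀))
    rw [Filter.map_map] at h1
    have h2 : rW ∘ gX = gY ∘ r := funext hcomm
    rw [h2] at h1
    rw [hcomm G₀, hrG₀] at h1
    exact h1
  have hfinal₂ : {x | gY x ∉ V} ∈ Filter.map r n := by
    have : {x | gY x ∉ V} ∈ l' := Filter.mem_inf_of_right (Filter.mem_principal_self _)
    rw [← hrm] at this
    exact Filter.le_def.mp (Filter.map_mono inf_le_right) _ this
  have hVc : {x | gY x ∉ V} ∈ Filter.map r n := hfinal₂
  have hVmem : gY ⁻¹' V ∈ Filter.map r n := by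
    have h := hfinal₁ hV
    rw [Filter.mem_map] at h ⊢
    rwa [Set.preimage_comp] at h
  refine Filter.empty_notMem (Filter.map r n) ?_
  have h := Filter.inter_mem hVmem hVc
  have hempty : gY ⁻¹' V ∩ {x | gY x ∉ V} = ∅ := by
    ext x
    simp only [Set.mem_inter_iff, Set.mem_preimage, Set.mem_setOf_eq, Set.mem_empty_iff_false]
    tauto
  rwa [hempty] at h
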